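/- Assuming O is finite, D ⊆ O is a minimal diagnosis for a DPI if and only if D is a minimal hitting set of the collection of all minimal conflicts for the DPI. -/

import Mathlib

open Set

variable {α : Type*}

/-- `C` is a conflict for the DPI `(O, B, P, N)` wrt entailment `Ent` and falsum `bot`. -/
def IsConflict (Ent : Set α → α → Prop) (bot : α) (O B P N C : Set α) : Prop :=
  C ⊆ O ∧ ∃ x ∈ N ∪ {bot}, Ent (C ∪ B ∪ P) x

/-- `C` is a minimal conflict. -/
def IsMinConflict (Ent : Set α → α → Prop) (bot : α) (O B P N C : Set α) : Prop :=
  IsConflict Ent bot O B P N C ∧ ∀ C' ⊂ C, ¬ IsConflict Ent bot O B P N C'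

/-- `D` is a diagnosis for the DPI `(O, B, P, N)`. -/
def IsDiagnosis (Ent : Set α → α → Prop) (bot : α) (O B P N D : Set α) : Prop :=
  D ⊆ O ∧ ∀ x ∈ N ∪ {bot}, ¬ Ent ((O \ D) ∪ B ∪ P) x

/-- `D` is a minimal diagnosis. -/
def IsMinDiagnosis (Ent : Set α → α → Prop) (bot : α) (O B P N D : Set α) : Prop :=
  IsDiagnosis Ent bot O B P N D ∧ ∀ D' ⊂ D, ¬ IsDiagnosis Ent bot O B P N D'

/-- `X` is a hitting set of the collection `S`. -/
def IsHittingSet (S : Set (Set α)) (X : Set α) : Prop :=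
  X ⊆ ⋃₀ S ∧ ∀ s ∈ S, (X ∩ s).Nonempty

/-- `X` is a minimal hitting set of the collection `S`. -/
def IsMinHittingSet (S : Set (Set α)) (X : Set α) : Prop :=
  IsHittingSet S X ∧ ∀ X' ⊂ X, ¬ IsHittingSet S X'

lemma exists_min_conflict_subset (Ent : Set α → α → Prop) (bot : α) (O B P N C : Set α)
    (hfin : O.Finite) (hC : IsConflict Ent bot O B P N C) :
    ∃ C' ⊆ C, IsMinConflict Ent bot O B P N C' := by
  have hCfin : C.Finite := hfin.subset hC.1
  have hT : {C' | C' ⊆ C ∧ IsConflict Ent bot O B P N C'}.Finite :=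
    hCfin.finite_subsets.subset (fun x hx => hx.1)
  obtain ⟨C₀, hC₀, hmin'⟩ := hT.exists_minimalFor id _ ⟨C, subset_rfl, hC⟩
  have hmin : ∀ C' ∈ {C' | C' ⊆ C ∧ IsConflict Ent bot O B P N C'}, C' ⊆ C₀ → C₀ = C' :=
    fun C' hC' hle => Subset.antisymm (hmin' hC' hle) hle
  refine ⟨C₀, hC₀.1, hC₀.2, ?_⟩
  intro C' hC' hconf
  have hmem : C' ∈ {C' | C' ⊆ C ∧ IsConflict Ent bot O B P N C'} :=
    ⟨hC'.subset.trans hC₀.1, hconf⟩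
  exact hC'.ne.symm (hmin C' hmem hC'.subset)

lemma diag_iff_hits_conflicts (Ent : Set α → α → Prop)
    (hmono : ∀ (S T : Set α) (x : α), S ⊆ T → Ent S x → Ent T x)
    (bot : α) (O B P N D : Set α) (hD : D ⊆ O) :
    IsDiagnosis Ent bot O B P N D ↔
      ∀ C, IsConflict Ent bot O B P N C → (D ∩ C).Nonempty := by
  constructor
  · rintro ⟨_, hdiag⟩ C ⟨hCO, x, hx, hent⟩
    by_contra hne
    have hsub : C ⊆ O \ D := fun c hc =>
      ⟨hCO hc, fun hcD => hne ⟨c, hcD, hc⟩⟩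
    exact hdiag x hx (hmono _ _ x (by
      refine union_subset (union_subset ?_ ?_) ?_ <;> intro y hy
      · exact subset_union_left (subset_union_left (hsub hy))
      · exact subset_union_left (subset_union_right hy)
      · exact subset_union_right hy) hent)
  · intro h
    refine ⟨hD, fun x hx hent => ?_⟩
    obtain ⟨c, hcD, hcOD⟩ := h (O \ D) ⟨diff_subset, x, hx, hent⟩
    exact hcOD.2 hcD

theorem min_diagnosis_iff_min_hitting_set (Ent : Set α → α → Prop)
    (hmono : ∀ (S T : Set α) (x : α), S ⊆ T → Ent S x → Ent T x)
    (bot : α) (O B P N D : Set α) (hfin : O.Finite) (hD : D ⊆ O) :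
    IsMinDiagnosis Ent bot O B P N D ↔
      IsMinHittingSet {C | IsMinConflict Ent bot O B P N C} D := by
  set S : Set (Set α) := {C | IsMinConflict Ent bot O B P N C} with hS
  -- hits all min conflicts → hits all conflicts
  have hits_all : ∀ X : Set α, (∀ s ∈ S, (X ∩ s).Nonempty) →
      ∀ C, IsConflict Ent bot O B P N C → (X ∩ C).Nonempty := by
    intro X hX C hC
    obtain ⟨C', hC'C, hC'⟩ := exists_min_conflict_subset Ent bot O B P N C hfin hC
    obtain ⟨c, hc1, hc2⟩ := hX C' hC'
    exact ⟨c, hc1, hC'C hc2⟩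
  constructor
  · rintro ⟨hdiag, hmindiag⟩
    have hhits := (diag_iff_hits_conflicts Ent hmono bot O B P N D hD).mp hdiag
    refine ⟨⟨?_, fun s hs => hhits s hs.1⟩, ?_⟩
    · -- D ⊆ ⋃₀ S
      intro d hd
      have hss : D \ {d} ⊂ D := sdiff_singleton_ssubset.mpr hd
      have hnd := hmindiag _ hss
      have hOconf : IsConflict Ent bot O B P N (O \ (D \ {d})) := by
        by_contra hnot
        exact hnd ⟨(diff_subset).trans hD, fun x hx hent =>
          hnot ⟨diff_subset, x, hx, hent⟩⟩
      obtain ⟨C₀, hC₀sub, hC₀⟩ :=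
        exists_min_conflict_subset Ent bot O B P N _ hfin hOconf
      have hdC₀ : d ∈ C₀ := by
        by_contra hdn
        obtain ⟨x, hx, hent⟩ := hC₀.1.2
        apply hdiag.2 x hx
        refine hmono _ _ x ?_ hent
        refine union_subset (union_subset ?_ ?_) ?_ <;> intro y hy
        · obtain ⟨hyO, hyD⟩ := hC₀sub hy
          refine subset_union_left (subset_union_left ⟨hyO, fun hyD' => ?_⟩)
          have : y = d := by
            by_contra hne
            exact hyD ⟨hyD', hne⟩
          exact hdn (this ▸ hy)
        · exact subset_union_left (subset_union_right hy)
        · exact subset_union_right hy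
      exact ⟨C₀, hC₀, hdC₀⟩
    · -- minimality
      rintro X' hX' ⟨_, hX'hits⟩
      have hX'O : X' ⊆ O := hX'.subset.trans hD
      exact hmindiag X' hX' ((diag_iff_hits_conflicts Ent hmono bot O B P N X' hX'O).mpr
        (hits_all X' hX'hits))
  · rintro ⟨⟨hsub, hhit⟩, hminhs⟩
    have hdiag : IsDiagnosis Ent bot O B P N D :=
      (diag_iff_hits_conflicts Ent hmono bot O B P N D hD).mpr (hits_all D hhit)
    refine ⟨hdiag, fun D' hD' hdiag' => ?_⟩
    apply hminhs D' hD'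
    refine ⟨hD'.subset.trans hsub, fun s hs => ?_⟩
    exact (diag_iff_hits_conflicts Ent hmono bot O B P N D' hdiag'.1).mp hdiag' s hs.1
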